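/- Let T be a compact Hermitian operator on a separable Hilbert space with real matrix entries in a fixed orthonormal basis, satisfying T_{11}=0, T_{1n} ≠ 0 for all n>1, ⟨c_1(T), c_n(T)⟩ = 0 for all n>1, and ‖c_1(T)‖ ≥ ‖T^{[1]}‖. Then T is minimal with respect to compact real diagonal perturbations: ‖T‖ ≤ ‖T + D‖ for every compact real diagonal operator D. Moreover the zero diagonal is the unique bounded real diagonal D' for which T + D' attains inf_{D} ‖T + D‖. -/

import Mathlib

open scoped InnerProductSpace
open ContinuousLinearMap

noncomputable section

variable {H : Type*} [NormedAddCommGroup H] [InnerProductSpace ℂ H] [CompleteSpace H]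

/-- The absolute value `|A| = (A^*A)^{1/2}` of an operator. -/
def opAbs (A : H →L[ℂ] H) : H →L[ℂ] H := CFC.sqrt (ContinuousLinearMap.adjoint A * A)

/-- The trace of an operator computed in the Hilbert basis `e`. -/
def opTrace (e : HilbertBasis ℕ ℂ H) (A : H →L[ℂ] H) : ℂ := ∑' n, ⟪e n, A (e n)⟫_ℂ

/-- The trace norm `‖A‖₁ = tr |A|` computed in the Hilbert basis `e`. -/
def traceNorm (e : HilbertBasis ℕ ℂ H) (A : H →L[ℂ] H) : ℝ :=
  ∑' n, (⟪e n, opAbs A (e n)⟫_ℂ).re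

/-- `A` is trace class: the diagonal of `|A|` is summable. -/
def IsTraceClass (e : HilbertBasis ℕ ℂ H) (A : H →L[ℂ] H) : Prop :=
  Summable fun n => (⟪e n, opAbs A (e n)⟫_ℂ).re

/-- `D` is diagonal in the basis `e` with real diagonal entries. -/
def RealDiag (e : HilbertBasis ℕ ℂ H) (D : H →L[ℂ] H) : Prop :=
  ∀ n, ∃ d : ℝ, D (e n) = (d : ℂ) • e n

/-- Distance from `C` to the compact real diagonal operators, in operator norm. -/
def diagDistK (e : HilbertBasis ℕ ℂ H) (C : H →L[ℂ] H) : ℝ :=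
  ⨅ D : {D : H →L[ℂ] H // IsCompactOperator ⇑D ∧ RealDiag e D}, ‖C + (D : H →L[ℂ] H)‖

/-- Positive part `X⁺ = (|X| + X)/2`. -/
def opPosPart (X : H →L[ℂ] H) : H →L[ℂ] H := (2⁻¹ : ℂ) • (opAbs X + X)

/-- Negative part `X⁻ = (|X| - X)/2`. -/
def opNegPart (X : H →L[ℂ] H) : H →L[ℂ] H := (2⁻¹ : ℂ) • (opAbs X - X)


set_option linter.unusedSectionVars false

lemma my_ext_vec (e : HilbertBasis ℕ ℂ H) {a b : H}
    (h : ∀ i, ⟪e i, a⟫_ℂ = ⟪e i, b⟫_ℂ) : a = b := by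
  have : e.repr a = e.repr b := by
    apply lp.ext
    funext i
    simpa [HilbertBasis.repr_apply_apply] using h i
  exact e.repr.injective this

lemma my_ext_op (e : HilbertBasis ℕ ℂ H) {A B : H →L[ℂ] H}
    (h : ∀ i j, ⟪e i, A (e j)⟫_ℂ = ⟪e i, B (e j)⟫_ℂ) : A = B := by
  have hadj : ∀ i, ContinuousLinearMap.adjoint A (e i) = ContinuousLinearMap.adjoint B (e i) := by
    intro i
    apply my_ext_vec e
    intro j
    rw [ContinuousLinearMap.adjoint_inner_right, ContinuousLinearMap.adjoint_inner_right]
    have := congrArg (starRingEnd ℂ) (h i j)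
    simpa using this
  ext x
  apply my_ext_vec e
  intro i
  rw [← ContinuousLinearMap.adjoint_inner_left, ← ContinuousLinearMap.adjoint_inner_left, hadj]

lemma my_realdiag_sa (e : HilbertBasis ℕ ℂ H) {D : H →L[ℂ] H} (hD : RealDiag e D) :
    IsSelfAdjoint D := by
  have hee : ∀ i j, ⟪e i, e j⟫_ℂ = if i = j then 1 else 0 := orthonormal_iff_ite.mp e.orthonormal
  rw [ContinuousLinearMap.isSelfAdjoint_iff']
  apply my_ext_op e
  intro i j
  rcases eq_or_ne i j with rfl | hij
  · obtain ⟨d, hd⟩ := hD i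
    rw [ContinuousLinearMap.adjoint_inner_right, hd, inner_smul_left, inner_smul_right]
    simp [Complex.conj_ofReal]
  · obtain ⟨dj, hdj⟩ := hD j
    obtain ⟨di, hdi⟩ := hD i
    rw [ContinuousLinearMap.adjoint_inner_right, hdj, hdi, inner_smul_left, inner_smul_right, hee]
    simp [hij]

lemma my_eig {A : H →L[ℂ] H} {c : ℝ} (hc : ‖A‖ ≤ c) {y : H}
    (hy : ⟪y, A y⟫_ℂ = ((c * ‖y‖ ^ 2 : ℝ) : ℂ)) : A y = (c : ℂ) • y := by
  have hc0 : 0 ≤ c := le_trans (norm_nonneg A) hc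
  have h1 : ‖A y‖ ≤ c * ‖y‖ := (A.le_opNorm y).trans
    (mul_le_mul_of_nonneg_right hc (norm_nonneg y))
  have h3 : ⟪A y, (c : ℂ) • y⟫_ℂ = ((c * (c * ‖y‖ ^ 2) : ℝ) : ℂ) := by
    rw [inner_smul_right, ← inner_conj_symm (A y) y, hy, Complex.conj_ofReal]
    push_cast
    ring
  have key : ‖A y - (c : ℂ) • y‖ ^ 2 ≤ 0 := by
    have hns := @norm_sub_sq ℂ _ _ _ _ (A y) ((c : ℂ) • y)
    rw [h3] at hns
    have hcy : ‖(c : ℂ) • y‖ = c * ‖y‖ := by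
      rw [norm_smul]
      simp [abs_of_nonneg hc0]
    rw [hns, hcy]
    have hre : (RCLike.re ((c * (c * ‖y‖ ^ 2) : ℝ) : ℂ)) = c * (c * ‖y‖ ^ 2) := by
      simp [← Complex.ofReal_pow]
    rw [hre]
    nlinarith [norm_nonneg (A y), norm_nonneg y]
  have h0 : ‖A y - (c : ℂ) • y‖ = 0 := by
    nlinarith [norm_nonneg (A y - (c : ℂ) • y), sq_nonneg ‖A y - (c : ℂ) • y‖]
  rw [← sub_eq_zero]
  exact norm_eq_zero.mp h0

lemma my_pyth (x y : H) (h : ⟪x, y⟫_ℂ = 0) : ‖x + y‖ ^ 2 = ‖x‖ ^ 2 + ‖y‖ ^ 2 := by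
  have := norm_add_sq_eq_norm_sq_add_norm_sq_of_inner_eq_zero x y h
  rw [pow_two, pow_two, pow_two]
  exact this

/-- `T` is minimal with respect to compact real diagonal perturbations,
and the zero diagonal is the unique bounded real diagonal minimizer. -/
theorem stmt_2 (e : HilbertBasis ℕ ℂ H) (T T1 : H →L[ℂ] H)
    (hcomp : IsCompactOperator ⇑T) (hsa : IsSelfAdjoint T)
    (hreal : ∀ i j, (⟪e i, T (e j)⟫_ℂ).im = 0)
    (hdiag0 : ⟪e 0, T (e 0)⟫_ℂ = 0)
    (hne : ∀ n, n ≠ 0 → ⟪e 0, T (e n)⟫_ℂ ≠ 0)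
    (horth : ∀ n, n ≠ 0 → ⟪T (e 0), T (e n)⟫_ℂ = 0)
    (hT1 : ∀ i j, ⟪e i, T1 (e j)⟫_ℂ = if i = 0 ∨ j = 0 then 0 else ⟪e i, T (e j)⟫_ℂ)
    (hnorm : ‖T1‖ ≤ ‖T (e 0)‖) :
    (∀ D : H →L[ℂ] H, IsCompactOperator ⇑D → RealDiag e D → ‖T‖ ≤ ‖T + D‖) ∧
    (∀ D' : H →L[ℂ] H, RealDiag e D' →
      (∀ D : H →L[ℂ] H, RealDiag e D → ‖T + D'‖ ≤ ‖T + D‖) → D' = 0) := by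
  
  have hee : ∀ i j, ⟪e i, e j⟫_ℂ = if i = j then 1 else 0 := orthonormal_iff_ite.mp e.orthonormal
  have hsaT : ∀ x y : H, ⟪T x, y⟫_ℂ = ⟪x, T y⟫_ℂ := fun x y => by
    nth_rewrite 1 [← hsa.adjoint_eq]
    exact ContinuousLinearMap.adjoint_inner_left T y x
  obtain ⟨w, hw⟩ : ∃ w, T (e 0) = w := ⟨_, rfl⟩
  have hw0 : ⟪e 0, w⟫_ℂ = 0 := hw ▸ hdiag0
  have hw_ne : w ≠ 0 := by
    intro h0
    apply hne 1 one_ne_zero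
    rw [← hsaT (e 0) (e 1), hw, h0, inner_zero_left]
  have hnw_pos : (0:ℝ) < ‖w‖ := norm_pos_iff.mpr hw_ne
  have hnwc : ((‖w‖ : ℂ)) ≠ 0 := by simpa using hnw_pos.ne'
  have hTw : T w = ((‖w‖ ^ 2 : ℝ) : ℂ) • e 0 := by
    apply my_ext_vec e
    intro i
    rcases eq_or_ne i 0 with rfl | hi
    · rw [← hsaT (e 0) w, hw, inner_self_eq_norm_sq_to_K, inner_smul_right, hee]
      simp
    · have h2 := horth i hi
      rw [hw] at h2
      rw [← hsaT (e i) w, ← inner_conj_symm (T (e i)) w, h2, map_zero, inner_smul_right, hee]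
      simp [hi]
  obtain ⟨u, hu⟩ : ∃ u, ((‖w‖ : ℂ))⁻¹ • w = u := ⟨_, rfl⟩
  have huw : w = (‖w‖ : ℂ) • u := by
    rw [← hu, smul_smul, mul_inv_cancel₀ hnwc, one_smul]
  have hnu : ‖u‖ = 1 := by
    rw [← hu, norm_smul]
    simp [abs_of_pos hnw_pos, inv_mul_cancel₀ hnw_pos.ne']
  have he0u : ⟪e 0, u⟫_ℂ = 0 := by
    rw [← hu, inner_smul_right, hw0, mul_zero]
  have hue0 : ⟪u, e 0⟫_ℂ = 0 := by
    rw [← inner_conj_symm, he0u, map_zero]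
  have huu : ⟪u, u⟫_ℂ = 1 := by
    rw [inner_self_eq_norm_sq_to_K, hnu]
    simp
  have hTu : T u = ((‖w‖ : ℝ) : ℂ) • e 0 := by
    rw [← hu, map_smul, hTw, smul_smul]
    congr 1
    rw [← Complex.ofReal_inv, ← Complex.ofReal_mul]
    congr 1
    field_simp
  have hwu2 : T (e 0) = (‖w‖ : ℂ) • u := by rw [hw]; exact huw
  have huTw : ⟪u, w⟫_ℂ = (‖w‖ : ℂ) := by
    conv_lhs => rw [huw]
    rw [inner_smul_right, huu, mul_one]
  -- T1 agrees with T on vectors orthogonal to e 0 and w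
  have hT1z : ∀ z : H, ⟪e 0, z⟫_ℂ = 0 → ⟪w, z⟫_ℂ = 0 → T1 z = T z := by
    intro z h1 h2
    obtain ⟨Qc, hQc⟩ : ∃ Qc : H →L[ℂ] H, ∀ x, Qc x = x - ⟪e 0, x⟫_ℂ • e 0 :=
      ⟨ContinuousLinearMap.id ℂ H - (innerSL ℂ (e 0)).smulRight (e 0), fun x => rfl⟩
    have hT1Q : T1 = Qc.comp (T.comp Qc) := by
      apply my_ext_op e
      intro i j
      rw [hT1]
      simp only [ContinuousLinearMap.comp_apply, hQc]
      rcases eq_or_ne j 0 with rfl | hj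
      · simp [hee, e.orthonormal.1 0]
      · rcases eq_or_ne i 0 with rfl | hi
        · simp [hee, hj, Ne.symm hj, inner_sub_right, inner_smul_right, e.orthonormal.1 0]
        · simp [hee, hj, hi, Ne.symm hj, Ne.symm hi, inner_sub_right, inner_smul_right, map_sub,
            map_smul]
    have h3 : ⟪e 0, T z⟫_ℂ = 0 := by
      rw [← hsaT (e 0) z, hw]
      exact h2
    rw [hT1Q]
    simp only [ContinuousLinearMap.comp_apply, hQc, h1, zero_smul, sub_zero, h3]
  have hT1n : ‖T1‖ ≤ ‖w‖ := by rw [← hw]; exact hnorm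
  -- Upper bound for ‖T‖
  have hTx : ∀ x : H, ‖T x‖ ≤ ‖w‖ * ‖x‖ := by
    intro x
    obtain ⟨α, hα⟩ : ∃ a, ⟪e 0, x⟫_ℂ = a := ⟨_, rfl⟩
    obtain ⟨β, hβ⟩ : ∃ b, ⟪u, x⟫_ℂ = b := ⟨_, rfl⟩
    obtain ⟨z, hz⟩ : ∃ z, x - α • e 0 - β • u = z := ⟨_, rfl⟩
    have he00 : ⟪e 0, e 0⟫_ℂ = 1 := by rw [hee]; simp
    have hz0 : ⟪e 0, z⟫_ℂ = 0 := by
      rw [← hz]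
      simp [inner_sub_right, inner_smul_right, he00, he0u, hα, e.orthonormal.1 0]
    have hzu : ⟪u, z⟫_ℂ = 0 := by
      rw [← hz]
      simp [inner_sub_right, inner_smul_right, hue0, huu, hβ, hnu]
    have hwz : ⟪w, z⟫_ℂ = 0 := by
      rw [huw, inner_smul_left, hzu, mul_zero]
    have hxz : x = α • e 0 + β • u + z := by rw [← hz]; abel
    have hTxz : T x = (α * ‖w‖) • u + (β * ‖w‖) • e 0 + T z := by
      conv_lhs => rw [hxz]
      rw [map_add, map_add, map_smul, map_smul, hwu2, hTu, smul_smul, smul_smul]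
    have h1 : ⟪u, T z⟫_ℂ = 0 := by
      rw [← hsaT u z, hTu, inner_smul_left, hz0, mul_zero]
    have h2 : ⟪e 0, T z⟫_ℂ = 0 := by
      rw [← hsaT (e 0) z, hw]
      exact hwz
    have hTz : ‖T z‖ ≤ ‖w‖ * ‖z‖ := by
      rw [← hT1z z hz0 hwz]
      exact (T1.le_opNorm z).trans (mul_le_mul_of_nonneg_right hT1n (norm_nonneg z))
    have hin1 : ⟪(α * ‖w‖) • u, (β * ‖w‖) • e 0⟫_ℂ = 0 := by
      rw [inner_smul_left, inner_smul_right, hue0]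
      ring
    have hin2 : ⟪(α * ‖w‖) • u + (β * ‖w‖) • e 0, T z⟫_ℂ = 0 := by
      rw [inner_add_left, inner_smul_left, inner_smul_left, h1, h2]
      ring
    have hno : ‖T x‖ ^ 2 = ‖(α * ‖w‖) • u‖ ^ 2 + ‖(β * ‖w‖) • e 0‖ ^ 2 + ‖T z‖ ^ 2 := by
      rw [hTxz, my_pyth _ _ hin2,
        my_pyth _ _ hin1]
    have hin3 : ⟪α • e 0, β • u⟫_ℂ = 0 := by
      rw [inner_smul_left, inner_smul_right, he0u]
      ring
    have hin4 : ⟪α • e 0 + β • u, z⟫_ℂ = 0 := by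
      rw [inner_add_left, inner_smul_left, inner_smul_left, hz0, hzu]
      ring
    have hnx : ‖x‖ ^ 2 = ‖α • e 0‖ ^ 2 + ‖β • u‖ ^ 2 + ‖z‖ ^ 2 := by
      conv_lhs => rw [hxz]
      rw [my_pyth _ _ hin4,
        my_pyth _ _ hin3]
    have hne0 : ‖e 0‖ = 1 := e.orthonormal.1 0
    have hsq : ‖T x‖ ^ 2 ≤ (‖w‖ * ‖x‖) ^ 2 := by
      rw [hno]
      have e1 : ‖(α * ‖w‖) • u‖ ^ 2 = ‖α‖ ^ 2 * ‖w‖ ^ 2 := by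
        rw [norm_smul, hnu, mul_one, norm_mul, Complex.norm_real, Real.norm_eq_abs,
          abs_of_pos hnw_pos, mul_pow]
      have e2 : ‖(β * ‖w‖) • e 0‖ ^ 2 = ‖β‖ ^ 2 * ‖w‖ ^ 2 := by
        rw [norm_smul, hne0, mul_one, norm_mul, Complex.norm_real, Real.norm_eq_abs,
          abs_of_pos hnw_pos, mul_pow]
      have e3 : ‖α • e 0‖ ^ 2 = ‖α‖ ^ 2 := by rw [norm_smul, hne0, mul_one]
      have e4 : ‖β • u‖ ^ 2 = ‖β‖ ^ 2 := by rw [norm_smul, hnu, mul_one]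
      rw [e1, e2, mul_pow, hnx, e3, e4]
      have h5 : ‖T z‖ ^ 2 ≤ ‖w‖ ^ 2 * ‖z‖ ^ 2 := by
        rw [← mul_pow]
        exact pow_le_pow_left₀ (norm_nonneg _) hTz 2
      linarith
    calc ‖T x‖ = Real.sqrt (‖T x‖ ^ 2) := (Real.sqrt_sq (norm_nonneg _)).symm
      _ ≤ Real.sqrt ((‖w‖ * ‖x‖) ^ 2) := Real.sqrt_le_sqrt hsq
      _ = ‖w‖ * ‖x‖ := Real.sqrt_sq (mul_nonneg hnw_pos.le (norm_nonneg x))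
  have hTnorm_le : ‖T‖ ≤ ‖w‖ := T.opNorm_le_bound hnw_pos.le hTx
  -- Values of the quadratic form at e 0 ± u, for any bounded real diagonal D
  have hval : ∀ D : H →L[ℂ] H, RealDiag e D → ∃ a : ℝ,
      ⟪e 0 + u, (T + D) (e 0 + u)⟫_ℂ = ((a + 2 * ‖w‖ : ℝ) : ℂ) ∧
      ⟪e 0 - u, (T + D) (e 0 - u)⟫_ℂ = ((a - 2 * ‖w‖ : ℝ) : ℂ) := by
    intro D hD
    have hDsa : IsSelfAdjoint D := my_realdiag_sa e hD
    have hsaD : ∀ x y : H, ⟪D x, y⟫_ℂ = ⟪x, D y⟫_ℂ := fun x y => by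
      nth_rewrite 1 [← hDsa.adjoint_eq]
      exact ContinuousLinearMap.adjoint_inner_left D y x
    obtain ⟨d0, hd0⟩ := hD 0
    obtain ⟨t, ht⟩ : ∃ t : ℝ, ⟪u, D u⟫_ℂ = (t : ℂ) := by
      refine ⟨(⟪u, D u⟫_ℂ).re, ?_⟩
      have hconj : (starRingEnd ℂ) ⟪u, D u⟫_ℂ = ⟪u, D u⟫_ℂ := by
        rw [inner_conj_symm, hsaD]
      rw [Complex.conj_eq_iff_re] at hconj
      exact hconj.symm
    have c1 : ⟪e 0, T (e 0)⟫_ℂ = 0 := hdiag0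
    have c2 : ⟪e 0, T u⟫_ℂ = (‖w‖ : ℂ) := by
      rw [hTu, inner_smul_right, hee]
      simp
    have c3 : ⟪u, T (e 0)⟫_ℂ = (‖w‖ : ℂ) := by rw [hw, huTw]
    have c4 : ⟪u, T u⟫_ℂ = 0 := by rw [hTu, inner_smul_right, hue0, mul_zero]
    have c5 : ⟪e 0, D (e 0)⟫_ℂ = (d0 : ℂ) := by
      rw [hd0, inner_smul_right, hee]
      simp
    have c6 : ⟪e 0, D u⟫_ℂ = 0 := by
      rw [← hsaD (e 0) u, hd0, inner_smul_left, he0u, mul_zero]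
    have c7 : ⟪u, D (e 0)⟫_ℂ = 0 := by rw [hd0, inner_smul_right, hue0, mul_zero]
    refine ⟨d0 + t, ?_, ?_⟩
    · simp only [ContinuousLinearMap.add_apply, map_add, map_sub, inner_add_left,
        inner_add_right, inner_sub_left, inner_sub_right, c1, c2, c3, c4, c5, c6, c7, ht]
      push_cast
      ring
    · simp only [ContinuousLinearMap.add_apply, map_add, map_sub, inner_add_left,
        inner_add_right, inner_sub_left, inner_sub_right, c1, c2, c3, c4, c5, c6, c7, ht]
      push_cast
      ring
  have hnyp : ‖e 0 + u‖ ^ 2 = 2 := by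
    rw [my_pyth _ _ he0u, e.orthonormal.1 0, hnu]
    norm_num
  have hnym : ‖e 0 - u‖ ^ 2 = 2 := by
    rw [sub_eq_add_neg, my_pyth _ _
      (by rw [inner_neg_right, he0u, neg_zero]), e.orthonormal.1 0, norm_neg, hnu]
    norm_num
  have hbound : ∀ (A : H →L[ℂ] H) (y : H), ‖⟪y, A y⟫_ℂ‖ ≤ ‖A‖ * ‖y‖ ^ 2 := by
    intro A y
    calc ‖⟪y, A y⟫_ℂ‖ ≤ ‖y‖ * ‖A y‖ := norm_inner_le_norm y (A y)
      _ ≤ ‖y‖ * (‖A‖ * ‖y‖) := mul_le_mul_of_nonneg_left (A.le_opNorm y) (norm_nonneg y)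
      _ = ‖A‖ * ‖y‖ ^ 2 := by ring
  have hlow : ∀ D : H →L[ℂ] H, RealDiag e D → ‖w‖ ≤ ‖T + D‖ := by
    intro D hD
    obtain ⟨a, hp, hm⟩ := hval D hD
    have b1 := hbound (T + D) (e 0 + u)
    have b2 := hbound (T + D) (e 0 - u)
    rw [hp, hnyp, Complex.norm_real] at b1
    rw [hm, hnym, Complex.norm_real] at b2
    rcases abs_le.mp b1 with ⟨b1l, b1r⟩
    rcases abs_le.mp b2 with ⟨b2l, b2r⟩
    linarith
  constructor
  · intro D _ hD
    exact hTnorm_le.trans (hlow D hD)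
  · intro D' hD' hmin
    have hD'sa : IsSelfAdjoint D' := my_realdiag_sa e hD'
    have hsaD' : ∀ x y : H, ⟪D' x, y⟫_ℂ = ⟪x, D' y⟫_ℂ := fun x y => by
      nth_rewrite 1 [← hD'sa.adjoint_eq]
      exact ContinuousLinearMap.adjoint_inner_left D' y x
    have hzero : RealDiag e (0 : H →L[ℂ] H) := fun n => ⟨0, by simp⟩
    have hA_le : ‖T + D'‖ ≤ ‖w‖ := by
      have h0 := hmin 0 hzero
      rw [add_zero] at h0
      exact h0.trans hTnorm_le
    obtain ⟨a, hp, hm⟩ := hval D' hD'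
    have b1 := hbound (T + D') (e 0 + u)
    have b2 := hbound (T + D') (e 0 - u)
    rw [hp, hnyp, Complex.norm_real] at b1
    rw [hm, hnym, Complex.norm_real] at b2
    have hAle2 : ‖T + D'‖ * 2 ≤ ‖w‖ * 2 := by linarith
    rcases abs_le.mp (b1.trans hAle2) with ⟨b1l, b1r⟩
    rcases abs_le.mp (b2.trans hAle2) with ⟨b2l, b2r⟩
    have ha0 : a = 0 := by linarith
    subst ha0
    have hyp : (T + D') (e 0 + u) = ((‖w‖ : ℝ) : ℂ) • (e 0 + u) := by
      apply my_eig hA_le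
      rw [hp, hnyp]
      push_cast
      ring
    have hym : (T + D') (e 0 - u) = -(((‖w‖ : ℝ) : ℂ) • (e 0 - u)) := by
      have hnegn : ‖-(T + D')‖ ≤ ‖w‖ := by rw [norm_neg]; exact hA_le
      have h := my_eig hnegn (y := e 0 - u) (by
        rw [ContinuousLinearMap.neg_apply, inner_neg_right, hm, hnym]
        push_cast
        ring)
      rw [ContinuousLinearMap.neg_apply, neg_eq_iff_eq_neg] at h
      exact h
    have hApe : (T + D') (e 0) + (T + D') u = ((‖w‖ : ℂ)) • e 0 + ((‖w‖ : ℂ)) • u := by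
      rw [← map_add, hyp, smul_add]
    have hAme : (T + D') (e 0) - (T + D') u = ((‖w‖ : ℂ)) • u - ((‖w‖ : ℂ)) • e 0 := by
      rw [← map_sub, hym, smul_sub, neg_sub]
    have hAe0 : (T + D') (e 0) = ((‖w‖ : ℂ)) • u := by
      have h2 : (2 : ℂ) • (T + D') (e 0) = (2 : ℂ) • (((‖w‖ : ℂ)) • u) := by
        calc (2 : ℂ) • (T + D') (e 0)
            = ((T + D') (e 0) + (T + D') u) + ((T + D') (e 0) - (T + D') u) := by
              rw [two_smul]; abel
          _ = (((‖w‖ : ℂ)) • e 0 + ((‖w‖ : ℂ)) • u) + (((‖w‖ : ℂ)) • u - ((‖w‖ : ℂ)) • e 0) := by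
              rw [hApe, hAme]
          _ = (2 : ℂ) • (((‖w‖ : ℂ)) • u) := by rw [two_smul]; abel
      exact smul_right_injective H two_ne_zero h2
    have hAu : (T + D') u = ((‖w‖ : ℂ)) • e 0 := by
      have h2 : (2 : ℂ) • (T + D') u = (2 : ℂ) • (((‖w‖ : ℂ)) • e 0) := by
        calc (2 : ℂ) • (T + D') u
            = ((T + D') (e 0) + (T + D') u) - ((T + D') (e 0) - (T + D') u) := by
              rw [two_smul]; abel
          _ = (((‖w‖ : ℂ)) • e 0 + ((‖w‖ : ℂ)) • u) - (((‖w‖ : ℂ)) • u - ((‖w‖ : ℂ)) • e 0) := by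
              rw [hApe, hAme]
          _ = (2 : ℂ) • (((‖w‖ : ℂ)) • e 0) := by rw [two_smul]; abel
      exact smul_right_injective H two_ne_zero h2
    have hD'e0 : D' (e 0) = 0 := by
      have h := hAe0
      rw [ContinuousLinearMap.add_apply, hw] at h
      rw [← huw] at h
      exact add_eq_left.mp h
    have hD'u : D' u = 0 := by
      have h := hAu
      rw [ContinuousLinearMap.add_apply, hTu] at h
      exact add_eq_left.mp h
    have hD'en : ∀ n, D' (e n) = 0 := by
      intro n
      rcases eq_or_ne n 0 with rfl | hn
      · exact hD'e0
      obtain ⟨dn, hdn⟩ := hD' n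
      have h1 : ⟪e n, D' u⟫_ℂ = 0 := by rw [hD'u, inner_zero_right]
      rw [← hsaD' (e n) u, hdn, inner_smul_left] at h1
      have henu : ⟪e n, u⟫_ℂ ≠ 0 := by
        rw [← hu, inner_smul_right]
        refine mul_ne_zero (inv_ne_zero hnwc) ?_
        rw [← hw, ← hsaT (e n) (e 0), ← inner_conj_symm (T (e n)) (e 0)]
        intro hc
        exact hne n hn (by simpa using congrArg (starRingEnd ℂ) hc)
      rcases mul_eq_zero.mp h1 with h | h
      · have hdz : (dn : ℂ) = 0 := by simpa using congrArg (starRingEnd ℂ) h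
        rw [hdn, hdz, zero_smul]
      · exact absurd h henu
    exact my_ext_op e fun i j => by simp [hD'en j]
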